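/- Let ω : ℝ → ℝ be continuous, let x : ℝ → ℝ satisfy x'' + ω(t)²·x = 0, and let ρ : ℝ → ℝ be strictly positive and satisfy the Ermakov–Pinney equation ρ'' + ω(t)²·ρ = 1/ρ³. Then the Lewis invariant I(t) = (1/2)·[(ρ(t)·x'(t) − ρ'(t)·x(t))² + (x(t)/ρ(t))²] is constant in t, i.e. I'(t) = 0 for all t. -/

import Mathlib

/-- The Lewis invariant `I = ½[(ρ x' − ρ' x)² + (x/ρ)²]` is constant along
solutions of `x'' + ω² x = 0` when `ρ > 0` solves the Ermakov–Pinney equation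
`ρ'' + ω² ρ = 1/ρ³`. -/
theorem stmt1 (ω x ρ : ℝ → ℝ) (hω : Continuous ω)
    (hx : Differentiable ℝ x) (hx' : Differentiable ℝ (deriv x))
    (hxeq : ∀ t, deriv (deriv x) t + ω t ^ 2 * x t = 0)
    (hρpos : ∀ t, 0 < ρ t)
    (hρ : Differentiable ℝ ρ) (hρ' : Differentiable ℝ (deriv ρ))
    (hρeq : ∀ t, deriv (deriv ρ) t + ω t ^ 2 * ρ t = 1 / ρ t ^ 3)
    (I : ℝ → ℝ)
    (hI : ∀ t, I t = (1 / 2) * ((ρ t * deriv x t - deriv ρ t * x t) ^ 2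
      + (x t / ρ t) ^ 2)) :
    ∀ t, deriv I t = 0 := by
  intro t
  have hIfun : I = fun s => (1 / 2) * ((ρ s * deriv x s - deriv ρ s * x s) ^ 2
      + (x s / ρ s) ^ 2) := funext hI
  have hxd := (hx t).hasDerivAt
  have hx'd := (hx' t).hasDerivAt
  have hρd := (hρ t).hasDerivAt
  have hρ'd := (hρ' t).hasDerivAt
  have hρne : ρ t ≠ 0 := (hρpos t).ne'
  have h1 := (((hρd.mul hx'd).sub (hρ'd.mul hxd)).pow 2).add
      ((hxd.div hρd hρne).pow 2)
  have h2 := h1.const_mul (1 / 2 : ℝ)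
  rw [hIfun]
  have h3 : HasDerivAt (fun s => (1 / 2) * ((ρ s * deriv x s - deriv ρ s * x s) ^ 2
      + (x s / ρ s) ^ 2)) _ t := h2
  rw [h3.deriv]
  simp only [Pi.sub_apply, Pi.mul_apply, Pi.div_apply]
  have hX : deriv (deriv x) t = -(ω t ^ 2 * x t) := by linarith [hxeq t]
  have hR : deriv (deriv ρ) t = 1 / ρ t ^ 3 - ω t ^ 2 * ρ t := by
    linarith [hρeq t]
  rw [hX, hR]
  simp only [Nat.cast_ofNat, Nat.add_one_sub_one, pow_one]
  field_simp
  ring
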